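/- There exist elements x, y, z of PSL(2,𝔽₇) with orderOf(x) = 2, orderOf(y) = 4, orderOf(z) = 7, x·y·z = 1, and such that {x, y, z} generates PSL(2,𝔽₇); that is, (0; 2, 4, 7) is a signature of PSL(2,𝔽₇). -/

import Mathlib

open Matrix

private abbrev SL7 := Matrix.SpecialLinearGroup (Fin 2) (ZMod 7)

private instance : DecidableEq SL7 := fun a b =>
  decidable_of_iff (a.1 = b.1) Subtype.ext_iff.symm

private def MA : SL7 := ⟨!![0,1;6,0], by decide⟩
private def MB : SL7 := ⟨!![0,1;6,3], by decide⟩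
private def MC : SL7 := ⟨!![6,4;0,6], by decide⟩

private def enc (g : SL7) : ℕ :=
  (g.1 0 0).val + 7*((g.1 0 1).val + 7*((g.1 1 0).val + 7*((g.1 1 1).val)))

private def mulc (i j : ℕ) : ℕ :=
  (i%7 * (j%7) + i/7%7 * (j/49%7)) % 7
  + 7*((i%7 * (j/7%7) + i/7%7 * (j/343%7)) % 7
  + 7*((i/49%7 * (j%7) + i/343%7 * (j/49%7)) % 7
  + 7*((i/49%7 * (j/7%7) + i/343%7 * (j/343%7)) % 7)))

private lemma mulc_encode (a b c d a' b' c' d' : ℕ)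
    (ha : a < 7) (hb : b < 7) (hc : c < 7) (hd : d < 7)
    (ha' : a' < 7) (hb' : b' < 7) (hc' : c' < 7) (hd' : d' < 7) :
    mulc (a+7*(b+7*(c+7*(d)))) (a'+7*(b'+7*(c'+7*(d')))) =
    (a*a'+b*c') % 7 + 7*((a*b'+b*d') % 7 + 7*((c*a'+d*c') % 7 + 7*((c*b'+d*d') % 7))) := by
  have h1 : (a+7*(b+7*(c+7*(d)))) % 7 = a := by omega
  have h2 : (a+7*(b+7*(c+7*(d)))) / 7 % 7 = b := by omega
  have h3 : (a+7*(b+7*(c+7*(d)))) / 49 % 7 = c := by omega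
  have h4 : (a+7*(b+7*(c+7*(d)))) / 343 % 7 = d := by omega
  have h1' : (a'+7*(b'+7*(c'+7*(d')))) % 7 = a' := by omega
  have h2' : (a'+7*(b'+7*(c'+7*(d')))) / 7 % 7 = b' := by omega
  have h3' : (a'+7*(b'+7*(c'+7*(d')))) / 49 % 7 = c' := by omega
  have h4' : (a'+7*(b'+7*(c'+7*(d')))) / 343 % 7 = d' := by omega
  unfold mulc
  rw [h1, h2, h3, h4, h1', h2', h3', h4']

private lemma enc_mul (g h : SL7) : enc (g * h) = mulc (enc g) (enc h) := by
  have vmul : ∀ x y z w : ZMod 7, (x*y + z*w).val = (x.val*y.val + z.val*w.val) % 7 := by decide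
  have hbd : ∀ x : ZMod 7, x.val < 7 := fun x => x.val_lt
  have key := mulc_encode (g.1 0 0).val (g.1 0 1).val (g.1 1 0).val (g.1 1 1).val
      (h.1 0 0).val (h.1 0 1).val (h.1 1 0).val (h.1 1 1).val
      (hbd _) (hbd _) (hbd _) (hbd _) (hbd _) (hbd _) (hbd _) (hbd _)
  have hcoe : (g * h).1 = g.1 * h.1 := rfl
  unfold enc
  rw [hcoe]
  simp only [Matrix.mul_apply, Fin.sum_univ_two, vmul]
  exact key.symm

private lemma enc_inj {g h : SL7} (e : enc g = enc h) : g = h := by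
  have hv : ∀ x y : ZMod 7, x.val = y.val → x = y := by decide
  have hbd : ∀ x : ZMod 7, x.val < 7 := fun x => x.val_lt
  unfold enc at e
  have b1 := hbd (g.1 0 0); have b2 := hbd (g.1 0 1)
  have b3 := hbd (g.1 1 0); have b4 := hbd (g.1 1 1)
  have b5 := hbd (h.1 0 0); have b6 := hbd (h.1 0 1)
  have b7 := hbd (h.1 1 0); have b8 := hbd (h.1 1 1)
  have e00 : (g.1 0 0).val = (h.1 0 0).val := by omega
  have e01 : (g.1 0 1).val = (h.1 0 1).val := by omega
  have e10 : (g.1 1 0).val = (h.1 1 0).val := by omega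
  have e11 : (g.1 1 1).val = (h.1 1 1).val := by omega
  refine Subtype.ext ?_
  ext i j
  fin_cases i <;> fin_cases j
  · exact hv _ _ e00
  · exact hv _ _ e01
  · exact hv _ _ e10
  · exact hv _ _ e11

def L : List Nat := [2004, 978, 628, 460, 1718, 2331, 121, 1076, 1619, 972, 796, 804, 2172, 1753, 1732, 2340, 2199, 1746, 1062, 1069, 273, 1963, 1388, 1381, 161, 1132, 704, 2320, 616, 959, 2046, 1834, 1020, 2249, 1190, 401, 1876, 2143, 1874, 847, 1632, 1822, 2119, 1533, 754, 1302, 1816, 1645, 1988, 233, 758, 1780, 2194, 697, 1374, 163, 984, 275, 1979, 805, 462, 690, 2329, 611, 278, 167, 1279, 1629, 1853, 1517, 917, 231, 842, 1416, 1409, 1521, 1828, 1145, 1885, 1048, 1055, 1777, 123, 1996, 2311, 1739, 2167, 732, 442, 120, 718, 489, 277, 2057, 606, 725, 711, 279, 601, 165, 837, 1402, 1395, 166, 1483, 1642, 1168, 739, 1010, 232, 1472, 1171, 947, 1283, 119, 2177, 788, 480, 1594, 2375, 915, 1914, 1707, 657, 1230, 1461, 574, 551, 2273, 2289, 96, 1083,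 1603, 2399, 1570, 2367, 926, 1946, 1260, 1668, 681, 886, 1941, 235, 1491, 1148, 935, 1313, 663, 1248, 2042, 125, 829, 237, 1506, 941, 773, 997, 1767, 124, 2189, 821, 471, 897, 1931, 1034, 1041, 236, 1958, 1298, 1135, 813, 1655, 164, 2031, 1806, 1023, 276, 633, 1987, 2309, 1760, 1725, 451, 2162, 1847, 122, 743, 906, 1919, 234, 1487, 1158, 953, 1317, 675, 1242, 1903, 869, 2012, 1790, 425, 527, 1206, 92, 570, 1093, 2078, 1328, 2245, 1339, 303, 2219, 504, 537, 306, 1685, 1181, 433, 1214, 409, 1865, 859, 1552, 1115, 2137, 2016, 1793, 501, 1905, 864, 669, 1273, 2027, 1803, 417, 1189, 162, 1294, 1665, 1859, 1502, 2113, 1564, 769, 987, 274, 589, 1971, 2349, 1222, 393, 1443, 1894, 881, 1110, 2106, 2276, 1611, 2383, 2125, 1558, 2230, 1357, 307, 358, 1441, 585, 379, 1423, 93, 555, 2263, 2286, 97, 1105, 1586, 2391, 2149, 1546, 1368, 1602, 2359, 1088, 2131, 1527, 895, 1936, 1236, 1695, 638, 777, 1007, 2358, 2299, 1578, 304, 2211,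 524, 1690, 351, 2071, 1348, 2234, 2099, 1359, 302, 2215, 514, 1673, 372, 491, 305, 1712, 1198, 434, 644, 1254, 540, 1432, 95, 365, 1463, 386, 1452, 94, 91, 566, 2260, 1120, 2085, 2064, 2092, 1330, 301, 344]

private def good : List ℕ → Bool
  | [] => true
  | k :: t => (k == 344 ||
      t.any fun j => k == mulc j 301 || k == mulc j 1330 || k == mulc j 2092) && good t

set_option maxRecDepth 4000 in
private lemma good_L : good L = true := by decide

private lemma good_spec : ∀ l : List ℕ, good l = true →
    ∀ k ∈ l, ∃ g : SL7, g ∈ Subgroup.closure {MA, MB, MC} ∧ enc g = k := by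
  intro l
  induction l with
  | nil => intro _ k hk; exact absurd hk List.not_mem_nil
  | cons k t ih =>
    intro hg m hm
    rw [good, Bool.and_eq_true] at hg
    obtain ⟨h1, h2⟩ := hg
    rcases List.mem_cons.1 hm with rfl | hm
    · rw [Bool.or_eq_true, beq_iff_eq] at h1
      rcases h1 with rfl | hany
      · exact ⟨1, Subgroup.one_mem _, by decide⟩
      · rw [List.any_eq_true] at hany
        obtain ⟨j, hj, hcase⟩ := hany
        rw [Bool.or_eq_true, Bool.or_eq_true, beq_iff_eq, beq_iff_eq, beq_iff_eq] at hcase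
        obtain ⟨g, hgmem, rfl⟩ := ih h2 j hj
        rcases hcase with (rfl | rfl) | rfl
        · exact ⟨g * MA, Subgroup.mul_mem _ hgmem (Subgroup.subset_closure (by simp)),
            by rw [enc_mul, show enc MA = 301 from by decide]⟩
        · exact ⟨g * MB, Subgroup.mul_mem _ hgmem (Subgroup.subset_closure (by simp)),
            by rw [enc_mul, show enc MB = 1330 from by decide]⟩
        · exact ⟨g * MC, Subgroup.mul_mem _ hgmem (Subgroup.subset_closure (by simp)),
            by rw [enc_mul, show enc MC = 2092 from by decide]⟩
    · exact ih h2 m hm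

private def slcond (k : ℕ) : Prop :=
  (k%7 * (k/343%7)) % 7 = (1 + (k/7%7) * (k/49%7)) % 7

private instance : DecidablePred slcond := fun k => by unfold slcond; infer_instance

set_option maxRecDepth 4000 in
private lemma cov1 : ∀ k ∈ List.range' 0 601, slcond k → k ∈ L := by decide
set_option maxRecDepth 4000 in
private lemma cov2 : ∀ k ∈ List.range' 601 600, slcond k → k ∈ L := by decide
set_option maxRecDepth 4000 in
private lemma cov3 : ∀ k ∈ List.range' 1201 600, slcond k → k ∈ L := by decide
set_option maxRecDepth 4000 in
private lemma cov4 : ∀ k ∈ List.range' 1801 600, slcond k → k ∈ L := by decide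

private lemma cov : ∀ k < 2401, slcond k → k ∈ L := by
  intro k hk
  rcases Nat.lt_or_ge k 601 with h | h
  · exact cov1 k (List.mem_range'_1.2 ⟨Nat.zero_le _, by omega⟩)
  rcases Nat.lt_or_ge k 1201 with h' | h'
  · exact cov2 k (List.mem_range'_1.2 ⟨h, by omega⟩)
  rcases Nat.lt_or_ge k 1801 with h'' | h''
  · exact cov3 k (List.mem_range'_1.2 ⟨h', by omega⟩)
  · exact cov4 k (List.mem_range'_1.2 ⟨h'', by omega⟩)

private lemma sl_slcond (g : SL7) : slcond (enc g) := by
  have hdet : ∀ x y z w : ZMod 7, x * w - y * z = 1 →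
      (x.val * w.val) % 7 = (1 + y.val * z.val) % 7 := by decide
  have hd : g.1 0 0 * g.1 1 1 - g.1 0 1 * g.1 1 0 = 1 := by
    rw [← Matrix.det_fin_two]; exact g.2
  have hv := hdet _ _ _ _ hd
  have hbd : ∀ x : ZMod 7, x.val < 7 := fun x => x.val_lt
  have b1 := hbd (g.1 0 0); have b2 := hbd (g.1 0 1)
  have b3 := hbd (g.1 1 0); have b4 := hbd (g.1 1 1)
  unfold slcond enc
  have h1 : ((g.1 0 0).val + 7*((g.1 0 1).val + 7*((g.1 1 0).val + 7*((g.1 1 1).val)))) % 7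
      = (g.1 0 0).val := by omega
  have h2 : ((g.1 0 0).val + 7*((g.1 0 1).val + 7*((g.1 1 0).val + 7*((g.1 1 1).val)))) / 7 % 7
      = (g.1 0 1).val := by omega
  have h3 : ((g.1 0 0).val + 7*((g.1 0 1).val + 7*((g.1 1 0).val + 7*((g.1 1 1).val)))) / 49 % 7
      = (g.1 1 0).val := by omega
  have h4 : ((g.1 0 0).val + 7*((g.1 0 1).val + 7*((g.1 1 0).val + 7*((g.1 1 1).val)))) / 343 % 7
      = (g.1 1 1).val := by omega
  rw [h1, h2, h3, h4]
  exact hv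

private lemma enc_lt (g : SL7) : enc g < 2401 := by
  have hbd : ∀ x : ZMod 7, x.val < 7 := fun x => x.val_lt
  have b1 := hbd (g.1 0 0); have b2 := hbd (g.1 0 1)
  have b3 := hbd (g.1 1 0); have b4 := hbd (g.1 1 1)
  unfold enc; omega

private lemma closure_SL : ∀ g : SL7, g ∈ Subgroup.closure {MA, MB, MC} := by
  intro g
  obtain ⟨g', hg', he⟩ := good_spec L good_L (enc g) (cov (enc g) (enc_lt g) (sl_slcond g))
  rwa [enc_inj he] at hg'

private instance : Fact (Nat.Prime 7) := ⟨by norm_num⟩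

private lemma neg_one_mem_center : (-1 : SL7) ∈ Subgroup.center SL7 := by
  apply Matrix.SpecialLinearGroup.mem_center_iff.mpr
  exact ⟨-1, by decide, by decide⟩

/-- `(0; 2, 4, 7)` is a signature of `PSL(2, 𝔽₇)`. -/
theorem signature_0_2_4_7_PSL2_F7 :
    ∃ x y z : Matrix.ProjectiveSpecialLinearGroup (Fin 2) (ZMod 7),
      orderOf x = 2 ∧ orderOf y = 4 ∧ orderOf z = 7 ∧ x * y * z = 1 ∧
      Subgroup.closure {x, y, z} = ⊤ := by
  have hpow : ∀ (g : SL7) (n : ℕ),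
      (QuotientGroup.mk g : Matrix.ProjectiveSpecialLinearGroup (Fin 2) (ZMod 7)) ^ n
        = QuotientGroup.mk (g ^ n) :=
    fun g n => ((QuotientGroup.mk' (Subgroup.center SL7)).map_pow g n).symm
  have hone : ∀ g : SL7, g ∈ Subgroup.center SL7 →
      (QuotientGroup.mk g : Matrix.ProjectiveSpecialLinearGroup (Fin 2) (ZMod 7)) = 1 :=
    fun g h => (QuotientGroup.eq_one_iff g).2 h
  have hnotone : ∀ g : SL7, (Matrix.scalar (Fin 2)) (g.1 0 0) ≠ g.1 →
      (QuotientGroup.mk g : Matrix.ProjectiveSpecialLinearGroup (Fin 2) (ZMod 7)) ≠ 1 := by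
    intro g hg h
    exact hg (Matrix.SpecialLinearGroup.scalar_eq_self_of_mem_center
      ((QuotientGroup.eq_one_iff g).1 h) 0)
  refine ⟨QuotientGroup.mk MA, QuotientGroup.mk MB, QuotientGroup.mk MC, ?_, ?_, ?_, ?_, ?_⟩
  · refine orderOf_eq_prime ?_ (hnotone MA (by decide))
    rw [hpow, show MA ^ 2 = -1 from by decide]
    exact hone _ neg_one_mem_center
  · have e1 : (QuotientGroup.mk MB : Matrix.ProjectiveSpecialLinearGroup (Fin 2) (ZMod 7))
        ^ (2:ℕ) ≠ 1 := by
      rw [hpow]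
      exact hnotone (MB ^ 2) (by decide)
    have e2 : (QuotientGroup.mk MB : Matrix.ProjectiveSpecialLinearGroup (Fin 2) (ZMod 7))
        ^ (4:ℕ) = 1 := by
      rw [hpow, show MB ^ 4 = -1 from by decide]
      exact hone _ neg_one_mem_center
    have := orderOf_eq_prime_pow (x := (QuotientGroup.mk MB :
        Matrix.ProjectiveSpecialLinearGroup (Fin 2) (ZMod 7))) (p := 2) (n := 1)
      (by norm_num; exact e1) (by norm_num; exact e2)
    norm_num at this
    exact this
  · refine orderOf_eq_prime ?_ (hnotone MC (by decide))
    rw [hpow, show MC ^ 7 = -1 from by decide]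
    exact hone _ neg_one_mem_center
  · show (QuotientGroup.mk (MA * MB * MC) :
        Matrix.ProjectiveSpecialLinearGroup (Fin 2) (ZMod 7)) = 1
    rw [show MA * MB * MC = 1 from by decide]
    exact hone _ (Subgroup.one_mem _)
  · rw [eq_top_iff]
    intro q _
    refine QuotientGroup.induction_on q fun g => ?_
    have hm : QuotientGroup.mk g ∈ Subgroup.map (QuotientGroup.mk' (Subgroup.center SL7))
        (Subgroup.closure {MA, MB, MC}) := ⟨g, closure_SL g, rfl⟩
    rwa [MonoidHom.map_closure, Set.image_insert_eq, Set.image_insert_eq,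
      Set.image_singleton] at hm
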